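/- Let A, B, C > 0 with A + B ≠ C, and define f(t) = (BC/(A+B−C))(e^{−Ct} − e^{−(A+B)t}) + A e^{−(A+B)t}. Then the mean duration of a reactive trajectory is τ = ∫₀^∞ t f(t) dt = (1/(A+B))·(1 + B/C). -/

import Mathlib

open Real MeasureTheory

lemma aux_integrable (r : ℝ) (hr : 0 < r) :
    IntegrableOn (fun t : ℝ => t * Real.exp (-r * t)) (Set.Ioi 0) := by
  have h := integrableOn_rpow_mul_exp_neg_mul_rpow (p := 1) (s := 1) (b := r)
    (by norm_num) zero_lt_one hr
  refine h.congr_fun (fun x hx => ?_) measurableSet_Ioi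
  simp [Real.rpow_one]

lemma aux_integral (r : ℝ) (hr : 0 < r) :
    (∫ t in Set.Ioi (0 : ℝ), t * Real.exp (-r * t)) = 1 / r ^ 2 := by
  have h := Real.integral_rpow_mul_exp_neg_mul_Ioi (a := 2) (r := r) (by norm_num) hr
  rw [Real.Gamma_two] at h
  rw [show (∫ t in Set.Ioi (0 : ℝ), t * Real.exp (-r * t))
      = ∫ t in Set.Ioi (0 : ℝ), t ^ ((2 : ℝ) - 1) * Real.exp (-(r * t)) from
    setIntegral_congr_fun measurableSet_Ioi (fun x hx => by
      norm_num [Real.rpow_one, neg_mul]), h, mul_one,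
    show ((2:ℝ)) = ((2:ℕ):ℝ) by norm_num, Real.rpow_natCast, div_pow, one_pow]

/-- The mean duration of a reactive trajectory in the three-level model:
`τ = ∫₀^∞ t f(t) dt = (1/(A+B)) (1 + B/C)`. -/
theorem three_level_mean_duration (A B C : ℝ)
    (hA : 0 < A) (hB : 0 < B) (hC : 0 < C) (hABC : A + B ≠ C)
    (f : ℝ → ℝ)
    (hf : f = fun t => B * C / (A + B - C) *
      (Real.exp (-C * t) - Real.exp (-(A + B) * t)) + A * Real.exp (-(A + B) * t)) :
    (∫ t in Set.Ioi (0 : ℝ), t * f t) = 1 / (A + B) * (1 + B / C) := by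
  have hS : 0 < A + B := by linarith
  set k := B * C / (A + B - C) with hk
  have hfun : ∀ t : ℝ, t * f t =
      k * (t * Real.exp (-C * t)) + (A - k) * (t * Real.exp (-(A + B) * t)) := by
    intro t; rw [hf]; ring
  rw [setIntegral_congr_fun measurableSet_Ioi (fun t _ => hfun t)]
  rw [integral_add ((aux_integrable C hC).const_mul k)
      ((aux_integrable (A + B) hS).const_mul (A - k)),
    integral_const_mul, integral_const_mul, aux_integral C hC, aux_integral (A + B) hS, hk]
  have hSC : A + B - C ≠ 0 := sub_ne_zero.mpr hABC
  field_simp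
  ring
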